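/- For every integer n ≥ 2, the sum over all permutations σ of {1,2,…,n} of as(σ), the length of the longest alternating (up-down) subsequence of σ, equals n! · (4n+1)/6; equivalently, the expectation of X_n, the length of the longest alternating subsequence of a uniformly random permutation of {1,…,n}, is μ_n = (2/3)n + 1/6. -/

import Mathlib

/-- The length of the longest alternating (up-down) subsequence of the
permutation `σ` of `{1,…,n}`: the largest `k` for which there exist indices
`i₁ < i₂ < ⋯ < i_k` with `σ(i₁) < σ(i₂) > σ(i₃) < σ(i₄) > ⋯`
(starting with a rise). -/
noncomputable def altSubseqLen {n : ℕ} (σ : Equiv.Perm (Fin n)) : ℕ :=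
  sSup {k | ∃ i : Fin k → Fin n, StrictMono i ∧
    ∀ j : ℕ, ∀ h : j + 1 < k,
      if j % 2 = 0
      then σ (i ⟨j, Nat.lt_of_succ_lt h⟩) < σ (i ⟨j + 1, h⟩)
      else σ (i ⟨j + 1, h⟩) < σ (i ⟨j, Nat.lt_of_succ_lt h⟩)}


namespace StanleyAux
variable {n : ℕ} (σ : Equiv.Perm (Fin n))

def fv (σ : Equiv.Perm (Fin n)) (i : ℕ) : ℕ := if h : i < n then (σ ⟨i, h⟩ : ℕ) else 0
def bA (σ : Equiv.Perm (Fin n)) (i : ℕ) : Bool := decide (fv σ i < fv σ (i + 1))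
def C (σ : Equiv.Perm (Fin n)) : Finset ℕ :=
  (Finset.Ico 1 (n - 1)).filter (fun i => bA σ i ≠ bA σ (i - 1))
def L (σ : Equiv.Perm (Fin n)) : ℕ := (C σ).card + 1 + (if bA σ 0 then 1 else 0)

lemma fv_coe (σ : Equiv.Perm (Fin n)) (x : Fin n) : fv σ (x : ℕ) = (σ x : ℕ) := by
  simp [fv, x.isLt]

lemma bA_true_iff (σ : Equiv.Perm (Fin n)) (i : ℕ) :
    bA σ i = true ↔ fv σ i < fv σ (i + 1) := by simp [bA]

lemma fv_inj (σ : Equiv.Perm (Fin n)) {i j : ℕ} (hi : i < n) (hj : j < n)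
    (h : fv σ i = fv σ j) : i = j := by
  simp only [fv, dif_pos hi, dif_pos hj] at h
  have := σ.injective (Fin.val_injective h)
  simpa [Fin.ext_iff] using this

lemma bA_false_iff (σ : Equiv.Perm (Fin n)) {i : ℕ} (h : i + 1 < n) :
    bA σ i = false ↔ fv σ (i + 1) < fv σ i := by
  simp only [bA, decide_eq_false_iff_not, not_lt]
  constructor
  · intro hle
    rcases hle.lt_or_eq with h' | h'
    · exact h'
    · exact absurd (fv_inj σ h (Nat.lt_of_succ_lt h) h') (by omega)
  · exact le_of_lt

lemma run_up {x y : ℕ} (hxy : x < y)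
    (hconst : ∀ p, x ≤ p → p < y → bA σ p = true) : fv σ x < fv σ y := by
  induction y with
  | zero => omega
  | succ y ih =>
    have hy' : fv σ y < fv σ (y + 1) := by
      simpa [bA] using hconst y (by omega) (by omega)
    rcases Nat.lt_or_ge x y with h | h
    · exact lt_trans (ih h (fun p hp hp' => hconst p hp (by omega))) hy'
    · have : x = y := by omega
      subst this; exact hy'

lemma run_down {x y : ℕ} (hxy : x < y) (hy : y < n)
    (hconst : ∀ p, x ≤ p → p < y → bA σ p = false) : fv σ y < fv σ x := by
  induction y with
  | zero => omega
  | succ y ih =>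
    have hy' : fv σ (y + 1) < fv σ y := by
      have := hconst y (by omega) (by omega)
      rwa [bA_false_iff σ hy] at this
    rcases Nat.lt_or_ge x y with h | h
    · exact lt_trans hy' (ih h (by omega) (fun p hp hp' => hconst p hp (by omega)))
    · have : x = y := by omega
      subst this; exact hy'

lemma exists_ascent {a b : ℕ} (hab : a < b) (hf : fv σ a < fv σ b) :
    ∃ p, a ≤ p ∧ p + 1 ≤ b ∧ bA σ p = true := by
  by_contra hc
  push_neg at hc
  have key : ∀ q, a ≤ q → q ≤ b → fv σ q ≤ fv σ a := by
    intro q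
    induction q with
    | zero => intro h1 _; have : a = 0 := by omega
              rw [this]
    | succ q ih =>
      intro h1 h2
      rcases Nat.lt_or_ge a (q + 1) with h | h
      · have hq' : fv σ (q + 1) ≤ fv σ q := by
          have := hc q (by omega) (by omega)
          simpa [bA, not_lt] using this
        exact le_trans hq' (ih (by omega) (by omega))
      · have : q + 1 = a := by omega
        rw [this]
  exact absurd (key b (by omega) le_rfl) (by omega)

lemma exists_descent {a b : ℕ} (hab : a < b) (hf : fv σ b < fv σ a) :
    ∃ p, a ≤ p ∧ p + 1 ≤ b ∧ bA σ p = false := by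
  by_contra hc
  push_neg at hc
  have key : ∀ q, a ≤ q → q ≤ b → fv σ a ≤ fv σ q := by
    intro q
    induction q with
    | zero => intro h1 _; have : a = 0 := by omega
              rw [this]
    | succ q ih =>
      intro h1 h2
      rcases Nat.lt_or_ge a (q + 1) with h | h
      · have hq' : fv σ q ≤ fv σ (q + 1) := by
          have h2' := hc q (by omega) (by omega)
          have : bA σ q = true := by
            cases hb : bA σ q
            · exact absurd hb h2'
            · rfl
          exact le_of_lt (by simpa [bA] using this)
        exact le_trans (ih (by omega) (by omega)) hq'
      · have : q + 1 = a := by omega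
        rw [this]
  exact absurd (key b (by omega) le_rfl) (by omega)

lemma exists_change {x y : ℕ} (hxy : x < y) (h : bA σ x ≠ bA σ y) :
    ∃ q, x < q ∧ q ≤ y ∧ bA σ q ≠ bA σ (q - 1) := by
  by_contra hc
  push_neg at hc
  have key : ∀ q, x ≤ q → q ≤ y → bA σ q = bA σ x := by
    intro q
    induction q with
    | zero => intro h1 _; have : x = 0 := by omega
              rw [this]
    | succ q ih =>
      intro h1 h2
      rcases Nat.lt_or_ge x (q + 1) with h' | h'
      · have := hc (q + 1) (by omega) (by omega)
        simp only [Nat.add_sub_cancel] at this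
        rw [this]; simpa using ih (by omega) (by omega)
      · have : q + 1 = x := by omega
        rw [this]
  exact h ((key y (by omega) le_rfl).symm)

lemma mem_C (σ : Equiv.Perm (Fin n)) {q : ℕ} (h1 : 1 ≤ q) (h2 : q < n - 1)
    (h3 : bA σ q ≠ bA σ (q - 1)) : q ∈ C σ := by
  simp [C, Finset.mem_filter, Finset.mem_Ico, h1, h2, h3]

lemma upper_bound (hn : 2 ≤ n) {k : ℕ} (i : Fin k → Fin n) (hmono : StrictMono i)
    (halt : ∀ j : ℕ, ∀ h : j + 1 < k,
      if j % 2 = 0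
      then σ (i ⟨j, Nat.lt_of_succ_lt h⟩) < σ (i ⟨j + 1, h⟩)
      else σ (i ⟨j + 1, h⟩) < σ (i ⟨j, Nat.lt_of_succ_lt h⟩)) :
    k ≤ L σ := by
  rcases Nat.lt_or_ge k 2 with hk | hk
  · have : 1 ≤ L σ := by unfold L; omega
    omega
  -- ℕ-valued index sequence
  set I : ℕ → ℕ := fun j => if h : j < k then (i ⟨j, h⟩ : ℕ) else 0 with hIdef
  have hImono : ∀ a b : ℕ, a < b → b < k → I a < I b := by
    intro a b hab hb
    simp only [hIdef, dif_pos hb, dif_pos (lt_trans hab hb)]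
    exact hmono (by simpa [Fin.lt_iff_val_lt_val] )
  have hIn : ∀ j, j < k → I j < n := by
    intro j hj
    simp only [hIdef, dif_pos hj]
    exact (i ⟨j, hj⟩).isLt
  -- the comparison at step j, in terms of fv
  have hcomp : ∀ j, ∀ h : j + 1 < k,
      if j % 2 = 0 then fv σ (I j) < fv σ (I (j + 1)) else fv σ (I (j + 1)) < fv σ (I j) := by
    intro j h
    have := halt j h
    simp only [hIdef, dif_pos h, dif_pos (Nat.lt_of_succ_lt h), fv_coe]
    split_ifs with hpar
    · rw [if_pos hpar] at this; exact this
    · rw [if_neg hpar] at this; exact this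
  -- pick a monotone step of the right direction inside each gap
  have hPex : ∀ j, j + 1 < k → ∃ p, I j ≤ p ∧ p + 1 ≤ I (j + 1) ∧
      bA σ p = decide (j % 2 = 0) := by
    intro j h
    have hlt : I j < I (j + 1) := hImono j (j + 1) (by omega) h
    have := hcomp j h
    rcases Nat.eq_zero_or_pos (j % 2) with hpar | hpar
    · rw [if_pos hpar] at this
      obtain ⟨p, h1, h2, h3⟩ := exists_ascent σ hlt this
      exact ⟨p, h1, h2, by simp [h3, hpar]⟩
    · have hpar' : ¬ (j % 2 = 0) := by omega
      rw [if_neg hpar'] at this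
      obtain ⟨p, h1, h2, h3⟩ := exists_descent σ hlt this
      exact ⟨p, h1, h2, by simp [h3, hpar']⟩
  choose P hP1 hP2 hP3 using hPex
  -- change points between consecutive picked steps
  have hRex : ∀ j, ∀ h : j + 2 < k, ∃ q,
      P j (by omega) < q ∧ q ≤ P (j + 1) h ∧ bA σ q ≠ bA σ (q - 1) := by
    intro j h
    have hlt : P j (by omega) < P (j + 1) h :=
      lt_of_lt_of_le (hP2 j (by omega)) (hP1 (j + 1) h)
    have hne : bA σ (P j (by omega)) ≠ bA σ (P (j + 1) h) := by
      rw [hP3, hP3]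
      rcases Nat.even_or_odd j with he | ho
      · have h1 : j % 2 = 0 := Nat.even_iff.mp he
        have h2 : (j + 1) % 2 = 1 := by omega
        simp [h1, h2]
      · have h1 : j % 2 = 1 := Nat.odd_iff.mp ho
        have h2 : (j + 1) % 2 = 0 := by omega
        simp [h1, h2]
    exact exists_change σ hlt hne
  choose R hR1 hR2 hR3 using hRex
  have hRC : ∀ j, ∀ h : j + 2 < k, R j h ∈ C σ := by
    intro j h
    refine mem_C σ (by have := hR1 j h; omega) ?_ (hR3 j h)
    have h1 := hR2 j h
    have h2 : P (j + 1) h + 1 ≤ I (j + 2) := hP2 (j + 1) h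
    have h3 := hIn (j + 2) h
    omega
  have hRlt : ∀ j, ∀ h : j + 3 < k, R j (by omega) < R (j + 1) (by omega) := by
    intro j h
    calc R j (by omega) ≤ P (j + 1) (by omega) := hR2 j (by omega)
      _ < R (j + 1) (by omega) := hR1 (j + 1) (by omega)
  have hRsmall : ∀ j, ∀ h : j + 2 < k, R j h < n - 1 := by
    intro j h
    have h1 := hR2 j h
    have h2 : P (j + 1) h + 1 ≤ I (j + 2) := hP2 (j + 1) h
    have h3 := hIn (j + 2) h
    omega
  cases hb0 : bA σ 0 with
  | true =>
    have key0 : (Finset.range (k - 2)).card ≤ (C σ).card := by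
      apply Finset.card_le_card_of_injOn (fun j => if h : j + 2 < k then R j h else j + n)
      · intro j hj
        simp only [Finset.mem_coe, Finset.mem_range] at hj
        beta_reduce
        rw [dif_pos (by omega)]
        exact hRC j (by omega)
      · have hsm : StrictMono (fun j => if h : j + 2 < k then R j h else j + n) := by
          apply strictMono_nat_of_lt_succ
          intro j
          by_cases h1 : j + 3 < k
          · rw [dif_pos (by omega : j + 2 < k), dif_pos h1]
            exact hRlt j h1
          · by_cases h2 : j + 2 < k
            · rw [dif_pos h2, dif_neg h1]
              have := hRsmall j h2
              omega
            · rw [dif_neg h2, dif_neg (by omega)]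
              omega
        exact hsm.injective.injOn
    rw [Finset.card_range] at key0
    unfold L
    rw [hb0]
    simp only [if_true]
    omega
  | false =>
    -- extra change point before P 0
    have hP0 : bA σ (P 0 (by omega)) = true := by
      rw [hP3]; simp
    have hP0pos : 0 < P 0 (by omega) := by
      rcases Nat.eq_zero_or_pos (P 0 (by omega)) with h | h
      · rw [h] at hP0; rw [hb0] at hP0; simp at hP0
      · exact h
    obtain ⟨r0, hr01, hr02, hr03⟩ := exists_change σ hP0pos (by rw [hb0, hP0]; simp)
    have hr0C : r0 ∈ C σ := by
      refine mem_C σ (by omega) ?_ hr03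
      have h2 : P 0 (by omega) + 1 ≤ I 1 := hP2 0 (by omega)
      have h3 := hIn 1 (by omega)
      omega
    set g : ℕ → ℕ := fun j => if h0 : j = 0 then r0 else
        if h : j + 1 < k then R (j - 1) (by omega) else j + n with hgdef
    have key0 : (Finset.range (k - 1)).card ≤ (C σ).card := by
      apply Finset.card_le_card_of_injOn g
      · intro j hj
        simp only [Finset.mem_coe, Finset.mem_range] at hj
        by_cases h0 : j = 0
        · simp only [hgdef, dif_pos h0]
          exact hr0C
        · simp only [hgdef, dif_neg h0]
          rw [dif_pos (by omega)]
          exact hRC (j - 1) (by omega)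
      · have hsm : StrictMono g := by
          apply strictMono_nat_of_lt_succ
          intro j
          by_cases h0 : j = 0
          · subst h0
            simp only [hgdef, dif_pos rfl, dif_neg (by omega : ¬ (0 + 1 = 0))]
            by_cases h1 : 0 + 1 + 1 < k
            · rw [dif_pos h1]
              have h4 : P 0 (by omega) < R 0 (by omega) := hR1 0 (by omega)
              have h5 : R 0 (by omega) = R (0 + 1 - 1) (by omega) := rfl
              omega
            · rw [dif_neg h1]
              have h2 : P 0 (by omega) + 1 ≤ I 1 := hP2 0 (by omega)
              have h3 := hIn 1 (by omega)
              omega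
          · simp only [hgdef, dif_neg h0, dif_neg (by omega : ¬ (j + 1 = 0))]
            by_cases h1 : j + 1 < k
            · rw [dif_pos h1]
              by_cases h2 : j + 2 < k
              · rw [dif_pos h2]
                have h3 : j - 1 + 3 < k := by omega
                have hh := hRlt (j - 1) h3
                have he : j - 1 + 1 = j + 1 - 1 := by omega
                have he2 : R (j - 1 + 1) (by omega) = R (j + 1 - 1) (by omega) := by
                  congr 1
                exact lt_of_lt_of_le hh (le_of_eq (by rw [he2]))
              · rw [dif_neg h2]
                have := hRsmall (j - 1) (by omega)
                omega
            · rw [dif_neg h1, dif_neg (by omega)]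
              omega
        exact hsm.injective.injOn
    rw [Finset.card_range] at key0
    unfold L
    rw [hb0]
    simp
    omega

lemma mem_C_iff (σ : Equiv.Perm (Fin n)) {q : ℕ} :
    q ∈ C σ ↔ 1 ≤ q ∧ q < n - 1 ∧ bA σ q ≠ bA σ (q - 1) := by
  simp [C, Finset.mem_filter, Finset.mem_Ico, and_assoc]

lemma bA_formula : ∀ p, p < n - 1 →
    bA σ p = xor (bA σ 0) (decide (((C σ).filter (· ≤ p)).card % 2 = 1)) := by
  intro p
  induction p with
  | zero =>
    intro _
    have he : (C σ).filter (· ≤ 0) = ∅ := by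
      rw [Finset.filter_eq_empty_iff]
      intro x hx
      have := (mem_C_iff σ).mp hx
      omega
    rw [he]
    simp
  | succ p ih =>
    intro hp
    have ihp := ih (by omega)
    have hmem : p + 1 ∈ C σ ↔ bA σ (p + 1) ≠ bA σ p := by
      rw [mem_C_iff]
      simp only [Nat.add_sub_cancel]
      constructor
      · tauto
      · intro h; exact ⟨by omega, by omega, h⟩
    by_cases hc : p + 1 ∈ C σ
    · have hcard : ((C σ).filter (· ≤ p + 1)).card = ((C σ).filter (· ≤ p)).card + 1 := by
        have : (C σ).filter (· ≤ p + 1) = insert (p + 1) ((C σ).filter (· ≤ p)) := by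
          ext x
          simp only [Finset.mem_filter, Finset.mem_insert]
          constructor
          · rintro ⟨hx, hle⟩
            rcases Nat.lt_or_ge x (p + 1) with h | h
            · exact Or.inr ⟨hx, by omega⟩
            · exact Or.inl (by omega)
          · rintro (rfl | ⟨hx, hle⟩)
            · exact ⟨hc, le_rfl⟩
            · exact ⟨hx, by omega⟩
        rw [this, Finset.card_insert_of_notMem (by simp)]
      have hne : bA σ (p + 1) = !(bA σ p) := by
        have := hmem.mp hc
        cases h1 : bA σ (p + 1) <;> cases h2 : bA σ p <;> simp_all
      rw [hne, ihp, hcard]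
      have hpar : decide ((((C σ).filter (· ≤ p)).card + 1) % 2 = 1)
          = !(decide (((C σ).filter (· ≤ p)).card % 2 = 1)) := by
        rcases Nat.even_or_odd ((C σ).filter (· ≤ p)).card with h | h
        · have h1 := Nat.even_iff.mp h
          have h2 : (((C σ).filter (· ≤ p)).card + 1) % 2 = 1 := by omega
          simp [h1, h2]
        · have h1 := Nat.odd_iff.mp h
          have h2 : (((C σ).filter (· ≤ p)).card + 1) % 2 = 0 := by omega
          simp [h1, h2]
      rw [hpar]
      cases bA σ 0 <;> cases decide (((C σ).filter (· ≤ p)).card % 2 = 1) <;> simp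
    · have hcard : ((C σ).filter (· ≤ p + 1)).card = ((C σ).filter (· ≤ p)).card := by
        congr 1
        ext x
        simp only [Finset.mem_filter]
        constructor
        · rintro ⟨hx, hle⟩
          refine ⟨hx, ?_⟩
          rcases Nat.lt_or_ge x (p + 1) with h | h
          · omega
          · exact absurd (by omega : x = p + 1) (by rintro rfl; exact hc hx)
        · rintro ⟨hx, hle⟩; exact ⟨hx, by omega⟩
      have hne : bA σ (p + 1) = bA σ p := by
        have := hmem.not.mp hc
        simp only [ne_eq, not_not] at this
        exact this
      rw [hne, ihp, hcard]


section Lower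
variable (hn : 2 ≤ n)

lemma exists_witness (hn : 2 ≤ n) :
    ∃ i : Fin (L σ) → Fin n, StrictMono i ∧
      ∀ j : ℕ, ∀ h : j + 1 < L σ,
        if j % 2 = 0
        then σ (i ⟨j, Nat.lt_of_succ_lt h⟩) < σ (i ⟨j + 1, h⟩)
        else σ (i ⟨j + 1, h⟩) < σ (i ⟨j, Nat.lt_of_succ_lt h⟩) := by
  classical
  set c := (C σ).card with hc
  set o := (C σ).orderIsoOfFin rfl with ho
  set q' : ℕ → ℕ := fun j => if h : j < c then (o ⟨j, h⟩ : ℕ) else n - 1 with hq'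
  have hq'C : ∀ j, j < c → q' j ∈ C σ := by
    intro j hj
    simp only [hq', dif_pos hj]
    exact (o ⟨j, hj⟩).2
  have hq'bnd : ∀ j, 1 ≤ q' j ∧ q' j ≤ n - 1 := by
    intro j
    by_cases hj : j < c
    · have := (mem_C_iff σ).mp (hq'C j hj)
      omega
    · simp only [hq', dif_neg hj]
      omega
  have hq'mono : ∀ a b, a < b → b ≤ c → q' a < q' b := by
    intro a b hab hbc
    rcases Nat.lt_or_ge b c with hb | hb
    · simp only [hq', dif_pos hb, dif_pos (by omega : a < c)]
      exact o.strictMono (by simp [Fin.lt_iff_val_lt_val, hab])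
    · have hbc2 : b = c := by omega
      have h1 := (mem_C_iff σ).mp (hq'C a (by omega))
      have h2 : q' b = n - 1 := by simp only [hq', dif_neg (by omega : ¬ b < c)]
      omega
  have hq'all : ∀ x ∈ C σ, ∃ j, ∃ h : j < c, x = q' j := by
    intro x hx
    refine ⟨(o.symm ⟨x, hx⟩ : Fin c), (o.symm ⟨x, hx⟩).isLt, ?_⟩
    simp only [hq', dif_pos (o.symm ⟨x, hx⟩).isLt]
    rw [dif_pos (o.symm ⟨x, hx⟩).isLt]
    have : o (o.symm ⟨x, hx⟩) = ⟨x, hx⟩ := o.apply_symm_apply _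
    rw [show (⟨(o.symm ⟨x, hx⟩ : Fin c), (o.symm ⟨x, hx⟩).isLt⟩ : Fin c)
      = o.symm ⟨x, hx⟩ from rfl, this]
  set m0 : ℕ := if bA σ 0 then 1 else 0 with hm0
  have hm01 : m0 ≤ 1 := by rw [hm0]; split_ifs <;> omega
  have hLm : L σ = c + 1 + m0 := rfl
  set E : ℕ → ℕ := fun j => if j < m0 then 0 else q' (j - m0) with hE
  have hEbnd : ∀ j, E j ≤ n - 1 := by
    intro j
    simp only [hE]
    split_ifs
    · omega
    · exact (hq'bnd _).2
  have hEn : ∀ j, E j < n := by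
    intro j
    have := hEbnd j
    omega
  have hEmono : ∀ a b, a < b → b ≤ c + m0 → E a < E b := by
    intro a b hab hbc
    simp only [hE]
    by_cases ha : a < m0
    · rw [if_pos ha, if_neg (by omega)]
      exact lt_of_lt_of_le (by omega) (hq'bnd (b - m0)).1
    · rw [if_neg ha, if_neg (by omega)]
      exact hq'mono _ _ (by omega) (by omega)
  -- segment direction
  have hseg : ∀ j, j + 1 ≤ c + m0 → ∀ p, E j ≤ p → p < E (j + 1) →
      bA σ p = decide (j % 2 = 0) := by
    intro j hj p hp1 hp2
    have hpn : p < n - 1 := lt_of_lt_of_le hp2 (hEbnd (j + 1))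
    have hEj1 : E (j + 1) = q' (j + 1 - m0) := by
      simp only [hE]
      rw [if_neg (by omega)]
    have hfilter : (C σ).filter (· ≤ p) = (Finset.range (j + 1 - m0)).image q' := by
      ext x
      simp only [Finset.mem_filter, Finset.mem_image, Finset.mem_range]
      constructor
      · rintro ⟨hx, hxp⟩
        obtain ⟨t, ht, rfl⟩ := hq'all x hx
        refine ⟨t, ?_, rfl⟩
        by_contra hcon
        push_neg at hcon
        have : q' (j + 1 - m0) ≤ q' t := by
          rcases Nat.lt_or_ge (j + 1 - m0) t with h | h
          · exact le_of_lt (hq'mono _ _ h (by omega))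
          · have : j + 1 - m0 = t := by omega
            rw [this]
        rw [← hEj1] at this
        omega
      · rintro ⟨t, ht, rfl⟩
        have htc : t < c := by omega
        refine ⟨hq'C t htc, ?_⟩
        have hjm : m0 ≤ j ∨ (j + 1 - m0 = 0) := by omega
        rcases hjm with hjm | hjm
        · have hEj : E j = q' (j - m0) := by
            simp only [hE]; rw [if_neg (by omega)]
          have : q' t ≤ q' (j - m0) := by
            rcases Nat.lt_or_ge t (j - m0) with h | h
            · exact le_of_lt (hq'mono _ _ h (by omega))
            · have : t = j - m0 := by omega
              rw [this]
          rw [← hEj] at this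
          omega
        · omega
    have hcard : ((C σ).filter (· ≤ p)).card = j + 1 - m0 := by
      rw [hfilter, Finset.card_image_of_injOn, Finset.card_range]
      intro a ha b hb hab
      simp only [Finset.coe_range, Set.mem_Iio] at ha hb
      by_contra hne
      rcases Nat.lt_or_ge a b with h | h
      · exact absurd hab (ne_of_lt (hq'mono a b h (by omega)))
      · exact absurd hab.symm (ne_of_lt (hq'mono b a (by omega) (by omega)))
    rw [bA_formula σ p hpn, hcard]
    cases hb0 : bA σ 0 with
    | true =>
      have hm : m0 = 1 := by simp [hm0, hb0]
      rcases Nat.even_or_odd j with h | h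
      · have h1 := Nat.even_iff.mp h
        have h2 : (j + 1 - m0) % 2 = 0 := by omega
        simp [h1, h2]
      · have h1 := Nat.odd_iff.mp h
        have h2 : (j + 1 - m0) % 2 = 1 := by omega
        simp [h1, h2]
    | false =>
      have hm : m0 = 0 := by simp [hm0, hb0]
      rcases Nat.even_or_odd j with h | h
      · have h1 := Nat.even_iff.mp h
        have h2 : (j + 1 - m0) % 2 = 1 := by omega
        simp [h1, h2]
      · have h1 := Nat.odd_iff.mp h
        have h2 : (j + 1 - m0) % 2 = 0 := by omega
        simp [h1, h2]
  clear hq' ho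
  clear_value q'
  clear o
  clear_value E m0 c
  refine ⟨fun j => ⟨E (j : ℕ), hEn _⟩, ?_, ?_⟩
  · intro a b hab
    have hb : (b : ℕ) < c + 1 + m0 := lt_of_lt_of_eq b.isLt hLm
    exact hEmono a b hab (by omega)
  · intro j h
    have h' : j + 1 < c + 1 + m0 := lt_of_lt_of_eq h hLm
    have hj : j + 1 ≤ c + m0 := by omega
    have hlt : E j < E (j + 1) := hEmono _ _ (by omega) hj
    have hfv : ∀ x : ℕ, ∀ hx : x < L σ,
        fv σ (E x) = (σ ⟨E x, hEn x⟩ : ℕ) := by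
      intro x hx
      have : fv σ ((⟨E x, hEn x⟩ : Fin n) : ℕ) = (σ ⟨E x, hEn x⟩ : ℕ) := fv_coe σ _
      simpa using this
    split_ifs with hpar
    · have : fv σ (E j) < fv σ (E (j + 1)) := by
        apply run_up σ hlt
        intro p hp1 hp2
        rw [hseg j hj p hp1 hp2]
        simp [hpar]
      rw [hfv j (by omega), hfv (j + 1) (by omega)] at this
      exact this
    · have : fv σ (E (j + 1)) < fv σ (E j) := by
        apply run_down σ hlt (hEn _)
        intro p hp1 hp2
        rw [hseg j hj p hp1 hp2]
        simp [hpar]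
      rw [hfv j (by omega), hfv (j + 1) (by omega)] at this
      exact this

end Lower

theorem altSubseqLen_eq (hn : 2 ≤ n) : altSubseqLen σ = L σ := by
  obtain ⟨iw, hw1, hw2⟩ := exists_witness σ hn
  have hmem : L σ ∈ {k | ∃ i : Fin k → Fin n, StrictMono i ∧
      ∀ j : ℕ, ∀ h : j + 1 < k,
        if j % 2 = 0
        then σ (i ⟨j, Nat.lt_of_succ_lt h⟩) < σ (i ⟨j + 1, h⟩)
        else σ (i ⟨j + 1, h⟩) < σ (i ⟨j, Nat.lt_of_succ_lt h⟩)} := ⟨iw, hw1, hw2⟩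
  have hub : ∀ k ∈ {k | ∃ i : Fin k → Fin n, StrictMono i ∧
      ∀ j : ℕ, ∀ h : j + 1 < k,
        if j % 2 = 0
        then σ (i ⟨j, Nat.lt_of_succ_lt h⟩) < σ (i ⟨j + 1, h⟩)
        else σ (i ⟨j + 1, h⟩) < σ (i ⟨j, Nat.lt_of_succ_lt h⟩)}, k ≤ L σ := by
    rintro k ⟨i, h1, h2⟩
    exact upper_bound σ hn i h1 h2
  apply le_antisymm
  · exact csSup_le ⟨L σ, hmem⟩ hub
  · exact le_csSup ⟨L σ, hub⟩ hmem

lemma sum_pair (a b : Fin n) (hab : a ≠ b) :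
    ∑ σ : Equiv.Perm (Fin n), (if σ a < σ b then (1:ℚ) else 0)
      = (Nat.factorial n : ℚ) / 2 := by
  have hswap : ∑ σ : Equiv.Perm (Fin n), (if σ a < σ b then (1:ℚ) else 0)
      = ∑ σ : Equiv.Perm (Fin n), (if σ b < σ a then (1:ℚ) else 0) := by
    apply Fintype.sum_equiv (Equiv.mulRight (Equiv.swap a b))
    intro σ
    simp only [Equiv.coe_mulRight, Equiv.Perm.mul_apply, Equiv.swap_apply_left,
      Equiv.swap_apply_right]
  have hone : ∀ σ : Equiv.Perm (Fin n), (if σ a < σ b then (1:ℚ) else 0)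
      + (if σ b < σ a then (1:ℚ) else 0) = 1 := by
    intro σ
    have hne : σ a ≠ σ b := fun h => hab (σ.injective h)
    rcases lt_trichotomy (σ a) (σ b) with h | h | h
    · simp [h, lt_asymm h]
    · exact absurd h hne
    · simp [h, lt_asymm h]
  have htot : ∑ σ : Equiv.Perm (Fin n), ((if σ a < σ b then (1:ℚ) else 0)
      + (if σ b < σ a then (1:ℚ) else 0)) = (Nat.factorial n : ℚ) := by
    rw [Finset.sum_congr rfl (fun σ _ => hone σ)]
    simp [Finset.card_univ, Fintype.card_perm]
  rw [Finset.sum_add_distrib, ← hswap] at htot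
  linarith

lemma sum_triple (a b c : Fin n) (hab : a ≠ b) (hac : a ≠ c) (hbc : b ≠ c) :
    ∑ σ : Equiv.Perm (Fin n), (if σ a < σ b ∧ σ b < σ c then (1:ℚ) else 0)
      = (Nat.factorial n : ℚ) / 6 := by
  set F : Fin n → Fin n → Fin n → ℚ :=
    fun x y z => ∑ σ : Equiv.Perm (Fin n), (if σ x < σ y ∧ σ y < σ z then (1:ℚ) else 0)
    with hF
  have swapL : ∀ x y z : Fin n, x ≠ z → y ≠ z → F x y z = F y x z := by
    intro x y z hxz hyz
    apply Fintype.sum_equiv (Equiv.mulRight (Equiv.swap x y))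
    intro σ
    simp only [Equiv.coe_mulRight, Equiv.Perm.mul_apply, Equiv.swap_apply_left,
      Equiv.swap_apply_right, Equiv.swap_apply_of_ne_of_ne (Ne.symm hxz) (Ne.symm hyz)]
  have swapR : ∀ x y z : Fin n, x ≠ y → x ≠ z → F x y z = F x z y := by
    intro x y z hxy hxz
    apply Fintype.sum_equiv (Equiv.mulRight (Equiv.swap y z))
    intro σ
    simp only [Equiv.coe_mulRight, Equiv.Perm.mul_apply, Equiv.swap_apply_left,
      Equiv.swap_apply_right, Equiv.swap_apply_of_ne_of_ne hxy hxz]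
  have h1 : F b a c = F a b c := (swapL a b c hac hbc).symm
  have h2 : F a c b = F a b c := (swapR a b c hab hac).symm
  have h3 : F b c a = F a b c := by
    rw [swapR b c a hbc hab.symm, h1]
  have h4 : F c a b = F a b c := by
    rw [swapL c a b hbc.symm hab, h2]
  have h5 : F c b a = F a b c := by
    rw [swapR c b a hbc.symm hac.symm, h4]
  have key : ∀ x y z : Fin n, x ≠ y → x ≠ z → y ≠ z →
      (if x < y ∧ y < z then (1:ℚ) else 0) + (if x < z ∧ z < y then (1:ℚ) else 0)
      + (if y < x ∧ x < z then (1:ℚ) else 0) + (if y < z ∧ z < x then (1:ℚ) else 0)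
      + (if z < x ∧ x < y then (1:ℚ) else 0) + (if z < y ∧ y < x then (1:ℚ) else 0)
      = 1 := by
    intro x y z hxy hxz hyz
    rcases lt_trichotomy x y with h1 | h1 | h1
    · rcases lt_trichotomy y z with h2 | h2 | h2
      · have h3' := lt_trans h1 h2
        simp [h1, h2, h3', lt_asymm h1, lt_asymm h2, lt_asymm h3']
      · exact absurd h2 hyz
      · rcases lt_trichotomy x z with h3' | h3' | h3'
        · simp [h1, h2, h3', lt_asymm h1, lt_asymm h2, lt_asymm h3']
        · exact absurd h3' hxz
        · simp [h1, h2, h3', lt_asymm h1, lt_asymm h2, lt_asymm h3']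
    · exact absurd h1 hxy
    · rcases lt_trichotomy x z with h2 | h2 | h2
      · have h3' := lt_trans h1 h2
        simp [h1, h2, h3', lt_asymm h1, lt_asymm h2, lt_asymm h3']
      · exact absurd h2 hxz
      · rcases lt_trichotomy y z with h3' | h3' | h3'
        · simp [h1, h2, h3', lt_asymm h1, lt_asymm h2, lt_asymm h3']
        · exact absurd h3' hyz
        · simp [h1, h2, h3', lt_asymm h1, lt_asymm h2, lt_asymm h3']
  have hsum : F a b c + F a c b + F b a c + F b c a + F c a b + F c b a
      = (Nat.factorial n : ℚ) := by
    rw [hF]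
    simp only [← Finset.sum_add_distrib]
    have : ∀ σ : Equiv.Perm (Fin n),
        (if σ a < σ b ∧ σ b < σ c then (1:ℚ) else 0)
        + (if σ a < σ c ∧ σ c < σ b then (1:ℚ) else 0)
        + (if σ b < σ a ∧ σ a < σ c then (1:ℚ) else 0)
        + (if σ b < σ c ∧ σ c < σ a then (1:ℚ) else 0)
        + (if σ c < σ a ∧ σ a < σ b then (1:ℚ) else 0)
        + (if σ c < σ b ∧ σ b < σ a then (1:ℚ) else 0) = 1 := by
      intro σ
      exact key (σ a) (σ b) (σ c) (fun h => hab (σ.injective h))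
        (fun h => hac (σ.injective h)) (fun h => hbc (σ.injective h))
    rw [Finset.sum_congr rfl (fun σ _ => this σ)]
    simp [Finset.card_univ, Fintype.card_perm]
  rw [h1, h2, h3, h4, h5] at hsum
  linarith


lemma sum_change (hn : 2 ≤ n) {i : ℕ} (h1 : 1 ≤ i) (h2 : i < n - 1) :
    ∑ σ : Equiv.Perm (Fin n), (if bA σ i ≠ bA σ (i - 1) then (1:ℚ) else 0)
      = 2 * (Nat.factorial n : ℚ) / 3 := by
  set a : Fin n := ⟨i - 1, by omega⟩ with had
  set b : Fin n := ⟨i, by omega⟩ with hbd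
  set c : Fin n := ⟨i + 1, by omega⟩ with hcd
  have hab : a ≠ b := by simp only [had, hbd, ne_eq, Fin.mk.injEq]; omega
  have hac : a ≠ c := by simp only [had, hcd, ne_eq, Fin.mk.injEq]; omega
  have hbc : b ≠ c := by simp only [hbd, hcd, ne_eq, Fin.mk.injEq]; omega
  have hpt : ∀ σ : Equiv.Perm (Fin n), (if bA σ i ≠ bA σ (i - 1) then (1:ℚ) else 0)
      = 1 - (if σ a < σ b ∧ σ b < σ c then (1:ℚ) else 0)
          - (if σ c < σ b ∧ σ b < σ a then (1:ℚ) else 0) := by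
    intro σ
    have hva : fv σ (i - 1) = (σ a : ℕ) := fv_coe σ a
    have hvb : fv σ i = (σ b : ℕ) := fv_coe σ b
    have hvc : fv σ (i + 1) = (σ c : ℕ) := fv_coe σ c
    have him : i - 1 + 1 = i := by omega
    have hAiff : bA σ (i - 1) = true ↔ σ a < σ b := by
      rw [bA_true_iff, him, hva, hvb, Fin.lt_iff_val_lt_val]
    have hAiff' : bA σ (i - 1) = false ↔ σ b < σ a := by
      rw [bA_false_iff σ (by omega : i - 1 + 1 < n), him, hva, hvb, Fin.lt_iff_val_lt_val]
    have hBiff : bA σ i = true ↔ σ b < σ c := by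
      rw [bA_true_iff, hvb, hvc, Fin.lt_iff_val_lt_val]
    have hBiff' : bA σ i = false ↔ σ c < σ b := by
      rw [bA_false_iff σ (by omega : i + 1 < n), hvb, hvc, Fin.lt_iff_val_lt_val]
    cases hA : bA σ (i - 1) with
    | true =>
      have hA' := hAiff.mp hA
      cases hB : bA σ i with
      | true =>
        have hB' := hBiff.mp hB
        simp [hA', hB', lt_asymm hB']
      | false =>
        have hB' := hBiff'.mp hB
        simp [lt_asymm hA', lt_asymm hB']
    | false =>
      have hA' := hAiff'.mp hA
      cases hB : bA σ i with
      | true =>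
        have hB' := hBiff.mp hB
        simp [lt_asymm hA', lt_asymm hB']
      | false =>
        have hB' := hBiff'.mp hB
        simp [hA', hB', lt_asymm hA']
  rw [Finset.sum_congr rfl (fun σ _ => hpt σ)]
  rw [Finset.sum_sub_distrib, Finset.sum_sub_distrib]
  rw [sum_triple a b c hab hac hbc, sum_triple c b a hbc.symm hac.symm hab.symm]
  simp [Finset.card_univ, Fintype.card_perm]
  ring

lemma sum_first (hn : 2 ≤ n) :
    ∑ σ : Equiv.Perm (Fin n), (if bA σ 0 then (1:ℚ) else 0)
      = (Nat.factorial n : ℚ) / 2 := by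
  set a : Fin n := ⟨0, by omega⟩ with had
  set b : Fin n := ⟨1, by omega⟩ with hbd
  have hab : a ≠ b := by simp only [had, hbd, ne_eq, Fin.mk.injEq]; omega
  have hpt : ∀ σ : Equiv.Perm (Fin n), (if bA σ 0 then (1:ℚ) else 0)
      = if σ a < σ b then (1:ℚ) else 0 := by
    intro σ
    have hva : fv σ 0 = (σ a : ℕ) := fv_coe σ a
    have hvb : fv σ 1 = (σ b : ℕ) := fv_coe σ b
    have : bA σ 0 = true ↔ σ a < σ b := by
      rw [bA_true_iff, hva, hvb, Fin.lt_iff_val_lt_val]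
    by_cases h : σ a < σ b
    · rw [if_pos (this.mpr h), if_pos h]
    · rw [if_neg (fun hh => h (this.mp hh)), if_neg h]
  rw [Finset.sum_congr rfl (fun σ _ => hpt σ), sum_pair a b hab]

lemma main_sum (hn : 2 ≤ n) :
    (∑ σ : Equiv.Perm (Fin n), (altSubseqLen σ : ℚ))
      = (Nat.factorial n : ℚ) * (4 * n + 1) / 6 := by
  have hcast : ∀ σ : Equiv.Perm (Fin n), (altSubseqLen σ : ℚ)
      = (∑ i ∈ Finset.Ico 1 (n - 1), (if bA σ i ≠ bA σ (i - 1) then (1:ℚ) else 0))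
        + 1 + (if bA σ 0 then (1:ℚ) else 0) := by
    intro σ
    rw [altSubseqLen_eq σ hn]
    unfold L
    rw [C, Finset.card_filter]
    push_cast [apply_ite (Nat.cast : ℕ → ℚ)]
    ring
  rw [Finset.sum_congr rfl (fun σ _ => hcast σ)]
  rw [Finset.sum_add_distrib, Finset.sum_add_distrib]
  rw [Finset.sum_comm]
  have hinner : ∀ i ∈ Finset.Ico 1 (n - 1),
      ∑ σ : Equiv.Perm (Fin n), (if bA σ i ≠ bA σ (i - 1) then (1:ℚ) else 0)
        = 2 * (Nat.factorial n : ℚ) / 3 := by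
    intro i hi
    simp only [Finset.mem_Ico] at hi
    exact sum_change hn hi.1 hi.2
  rw [Finset.sum_congr rfl hinner, Finset.sum_const, Nat.card_Ico, sum_first hn]
  have hcard : ∑ _σ : Equiv.Perm (Fin n), (1:ℚ) = (Nat.factorial n : ℚ) := by
    simp [Finset.card_univ, Fintype.card_perm]
  rw [hcard]
  have hn2 : ((n - 1 - 1 : ℕ) : ℚ) = (n : ℚ) - 2 := by
    have : n - 1 - 1 = n - 2 := by omega
    rw [this, Nat.cast_sub hn]
    norm_num
  rw [nsmul_eq_mul, hn2]
  ring

end StanleyAux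

/-- For every `n ≥ 2`, `∑_{σ ∈ S_n} as(σ) = n!·(4n+1)/6`; equivalently the
expectation of `X_n` is `μ_n = (2/3)n + 1/6`. -/
theorem stanley_expectation (n : ℕ) (hn : 2 ≤ n) :
    (∑ σ : Equiv.Perm (Fin n), (altSubseqLen σ : ℚ)) = (Nat.factorial n : ℚ) * (4 * n + 1) / 6 ∧
    (1 / (Nat.factorial n : ℚ)) * ∑ σ : Equiv.Perm (Fin n), (altSubseqLen σ : ℚ)
      = 2 / 3 * n + 1 / 6 := by
  have h1 := StanleyAux.main_sum (n := n) hn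
  refine ⟨h1, ?_⟩
  rw [h1]
  have hf : (Nat.factorial n : ℚ) ≠ 0 := by
    exact_mod_cast Nat.factorial_ne_zero n
  field_simp
  ring
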